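/- arXiv:2110.11912 — 5 statements merged into one kernel-verified Lean document; each statement's English description precedes it below -/
import Mathlib

section
/- Relation of peculiar velocities to the stress tensor (Lemma 2.2): under the binary mixture setup with velocities in ℝ^d, the outer-product identity ρ̃₁ w₁ ⊗ w₁ + ρ̃₂ w₂ ⊗ w₂ = ρ̃₁ ω₁ ⊗ ω₁ + ρ̃₂ ω₂ ⊗ ω₂ − (1/ρ) J̃ᵘ ⊗ J̃ᵘ holds, where a ⊗ b denotes the d×d matrix with entries aᵢ bⱼ. -/
open Matrix

/-- **Relation of peculiar velocities to the stress tensor (Lemma 2.2).**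
Under the binary mixture setup with velocities in `ℝ^d`,
`ρt₁ w₁ ⊗ w₁ + ρt₂ w₂ ⊗ w₂ = ρt₁ ω₁ ⊗ ω₁ + ρt₂ ω₂ ⊗ ω₂ - (1/ρ) Jtu ⊗ Jtu`,
where `a ⊗ b` is the `d × d` matrix with entries `aᵢ bⱼ` (`Matrix.vecMulVec`),
`wⱼ = vⱼ - v`, `ωⱼ = vⱼ - u` and `Jtu = ρt₁ ω₁ + ρt₂ ω₂` is the diffusive
flux `J̃ᵘ`. -/
theorem peculiar_velocities_stress_identity
    {d : ℕ}
    (ρ₁ ρ₂ φ₁ φ₂ ρt₁ ρt₂ ρ : ℝ)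
    (hρ₁ : 0 < ρ₁) (hρ₂ : 0 < ρ₂)
    (hφ : φ₁ + φ₂ = 1)
    (hρt₁ : ρt₁ = ρ₁ * φ₁) (hρt₂ : ρt₂ = ρ₂ * φ₂)
    (hρ : ρ = ρt₁ + ρt₂) (hρ0 : ρ ≠ 0)
    (v₁ v₂ v u w₁ w₂ ω₁ ω₂ Jtu : Fin d → ℝ)
    (hv : ρ • v = ρt₁ • v₁ + ρt₂ • v₂)
    (hu : u = φ₁ • v₁ + φ₂ • v₂)
    (hw₁ : w₁ = v₁ - v) (hw₂ : w₂ = v₂ - v)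
    (hω₁ : ω₁ = v₁ - u) (hω₂ : ω₂ = v₂ - u)
    (hJtu : Jtu = ρt₁ • ω₁ + ρt₂ • ω₂) :
    ρt₁ • vecMulVec w₁ w₁ + ρt₂ • vecMulVec w₂ w₂ =
      ρt₁ • vecMulVec ω₁ ω₁ + ρt₂ • vecMulVec ω₂ ω₂
        - (1 / ρ) • vecMulVec Jtu Jtu := by
  subst hw₁ hw₂ hω₁ hω₂ hJtu hu
  ext i j
  have hvi := congrFun hv i
  have hvj := congrFun hv j
  simp only [Pi.smul_apply, Pi.add_apply, smul_eq_mul] at hvi hvj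
  have hvi' : v i = (ρt₁ * v₁ i + ρt₂ * v₂ i) / ρ := by
    field_simp; linarith
  have hvj' : v j = (ρt₁ * v₁ j + ρt₂ * v₂ j) / ρ := by
    field_simp; linarith
  simp only [Matrix.add_apply, Matrix.sub_apply, Matrix.smul_apply,
    vecMulVec_apply, Pi.add_apply, Pi.sub_apply, Pi.smul_apply, smul_eq_mul,
    hvi', hvj', hρ]
  have h0 : ρt₁ + ρt₂ ≠ 0 := hρ ▸ hρ0
  field_simp
  ring
end

section
/- First identity of Lemma 3.1: let ψ : ℝ × ℝ^d → ℝ be continuously differentiable, φ : ℝ^d → ℝ twice continuously differentiable, and define r(a) = ρ₁(1+a)/2 + ρ₂(1−a)/2 and Ψ(a,q) = r(a) ψ(a,q). Fix x ∈ ℝ^d with r(φ(x)) ≠ 0 and assume the vector fields y ↦ ∂₂Ψ(φ(y), ∇φ(y)) and y ↦ r(φ(y)) ∂₂ψ(φ(y), ∇φ(y)) are differentiable at x. Define μ̂(x) = ∂₁Ψ(φ(x), ∇φ(x)) − div[y ↦ ∂₂Ψ(φ(y), ∇φ(y))](x) and μ̂̂(x) = ∂₁ψ(φ(x), ∇φ(x))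 − (1/r(φ(x))) div[y ↦ r(φ(y)) ∂₂ψ(φ(y), ∇φ(y))](x). Then μ̂(x) = r(φ(x)) μ̂̂(x) + ψ(φ(x), ∇φ(x)) · [[ρ]], where [[ρ]] = (ρ₁ − ρ₂)/2. -/
/-- The spatial gradient of a scalar field on `ℝ^d`. -/
noncomputable def grad {d : ℕ} (f : (Fin d → ℝ) → ℝ) (x : Fin d → ℝ) : Fin d → ℝ :=
  fun i => fderiv ℝ f x (Pi.single i 1)

/-- The divergence `∑ i, ∂ᵢ Fᵢ` of a vector field on `ℝ^d`. -/
noncomputable def diver {d : ℕ} (F : (Fin d → ℝ) → (Fin d → ℝ)) (x : Fin d → ℝ) : ℝ :=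
  ∑ i, fderiv ℝ F x (Pi.single i 1) i

/-- The partial derivative of `Ψ : ℝ × ℝ^d → ℝ` in the scalar slot. -/
noncomputable def d1 {d : ℕ} (Ψ : ℝ × (Fin d → ℝ) → ℝ) (a : ℝ) (q : Fin d → ℝ) : ℝ :=
  fderiv ℝ Ψ (a, q) (1, 0)

/-- The partial gradient of `Ψ : ℝ × ℝ^d → ℝ` in the vector slot. -/
noncomputable def d2 {d : ℕ} (Ψ : ℝ × (Fin d → ℝ) → ℝ) (a : ℝ) (q : Fin d → ℝ) :
    Fin d → ℝ :=
  fun i => fderiv ℝ Ψ (a, q) (0, Pi.single i 1)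

/-- **First identity of Lemma 3.1.**
Let `ψ` be a `C¹` mass-measure-based free energy, `φ` a `C²` order-parameter
field, `r(a) = ρ₁(1+a)/2 + ρ₂(1-a)/2` the density and `Ψ(a,q) = r(a) ψ(a,q)`
the associated volume-measure-based free energy.  If `r(φ(x)) ≠ 0` and the two
flux fields are differentiable at `x`, then the chemical potentials
`μ̂(x) = ∂₁Ψ(φ,∇φ) - div(∂₂Ψ(φ,∇φ))` and
`μ̂̂(x) = ∂₁ψ(φ,∇φ) - (1/r(φ)) div(r(φ) ∂₂ψ(φ,∇φ))` satisfy
`μ̂ = r(φ) μ̂̂ + ψ(φ,∇φ) [[ρ]]` with `[[ρ]] = (ρ₁-ρ₂)/2`. -/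
theorem chemical_potential_identity_one
    {d : ℕ} (ρ₁ ρ₂ : ℝ) (hρ₁ : 0 < ρ₁) (hρ₂ : 0 < ρ₂)
    (ψ : ℝ × (Fin d → ℝ) → ℝ) (hψ : ContDiff ℝ 1 ψ)
    (φ : (Fin d → ℝ) → ℝ) (hφ : ContDiff ℝ 2 φ)
    (r : ℝ → ℝ) (hr : ∀ a, r a = ρ₁ * (1 + a) / 2 + ρ₂ * (1 - a) / 2)
    (Ψ : ℝ × (Fin d → ℝ) → ℝ) (hΨ : ∀ a q, Ψ (a, q) = r a * ψ (a, q))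
    (x : Fin d → ℝ) (hrx : r (φ x) ≠ 0)
    (hF1 : DifferentiableAt ℝ (fun y => d2 Ψ (φ y) (grad φ y)) x)
    (hF2 : DifferentiableAt ℝ (fun y => r (φ y) • d2 ψ (φ y) (grad φ y)) x) :
    d1 Ψ (φ x) (grad φ x) - diver (fun y => d2 Ψ (φ y) (grad φ y)) x =
      r (φ x) *
        (d1 ψ (φ x) (grad φ x)
          - (1 / r (φ x)) * diver (fun y => r (φ y) • d2 ψ (φ y) (grad φ y)) x)
      + ψ (φ x, grad φ x) * ((ρ₁ - ρ₂) / 2) := by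

  classical
  set m : ℝ := (ρ₁ - ρ₂) / 2 with hm
  -- the derivative of the affine map p ↦ r p.1
  have hrlin : ∀ p : ℝ × (Fin d → ℝ),
      HasFDerivAt (fun p : ℝ × (Fin d → ℝ) => r p.1)
        (m • ContinuousLinearMap.fst ℝ ℝ (Fin d → ℝ)) p := by
    intro p
    have h1 : (fun p : ℝ × (Fin d → ℝ) => r p.1)
        = fun p : ℝ × (Fin d → ℝ) => (ρ₁ + ρ₂) / 2 + m * p.1 := by
      funext p; rw [hr]; simp [hm]; ring
    rw [h1]
    exact ((hasFDerivAt_fst.const_mul m)).const_add _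
  have hψd : ∀ p : ℝ × (Fin d → ℝ), HasFDerivAt ψ (fderiv ℝ ψ p) p :=
    fun p => (hψ.differentiable one_ne_zero p).hasFDerivAt
  have hΨeq : Ψ = fun p : ℝ × (Fin d → ℝ) => r p.1 * ψ p := by
    funext p
    have := hΨ p.1 p.2
    simpa using this
  have hΨd : ∀ p : ℝ × (Fin d → ℝ),
      HasFDerivAt Ψ
        (r p.1 • fderiv ℝ ψ p + ψ p • (m • ContinuousLinearMap.fst ℝ ℝ (Fin d → ℝ))) p := by
    intro p
    rw [hΨeq]
    exact (hrlin p).mul (hψd p)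
  have hfd : ∀ p : ℝ × (Fin d → ℝ),
      fderiv ℝ Ψ p
        = r p.1 • fderiv ℝ ψ p + ψ p • (m • ContinuousLinearMap.fst ℝ ℝ (Fin d → ℝ)) :=
    fun p => (hΨd p).fderiv
  -- compute d1 Ψ
  have hd1 : d1 Ψ (φ x) (grad φ x)
      = r (φ x) * d1 ψ (φ x) (grad φ x) + ψ (φ x, grad φ x) * m := by
    simp only [d1, hfd]
    simp [ContinuousLinearMap.add_apply, ContinuousLinearMap.smul_apply]
  -- compute d2 Ψ
  have hd2 : ∀ a q, d2 Ψ a q = r a • d2 (d := d) ψ a q := by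
    intro a q
    funext i
    simp only [d2, hfd]
    simp [ContinuousLinearMap.add_apply, ContinuousLinearMap.smul_apply, d2]
  have hdiv : diver (fun y => d2 Ψ (φ y) (grad φ y)) x
      = diver (fun y => r (φ y) • d2 ψ (φ y) (grad φ y)) x := by
    congr 1
    funext y
    exact hd2 (φ y) (grad φ y)
  rw [hd1, hdiv]
  field_simp
  ring
end

section
/- Second identity of Lemma 3.1: let ψ : ℝ × ℝ^d → ℝ be continuously differentiable, c : ℝ^d → ℝ twice continuously differentiable, and define the density s(a) by 1/s(a) = (1+a)/(2ρ₁) + (1−a)/(2ρ₂) and Ψ(a,q) = s(a) ψ(a,q). Fix x ∈ ℝ^d such that (1+c(x))/(2ρ₁) + (1−c(x))/(2ρ₂) ≠ 0 and assume the vector fields y ↦ ∂₂Ψ(c(y), ∇c(y)) and y ↦ s(c(y)) ∂₂ψ(c(y), ∇c(y)) are differentiable at x. Define μ̌(x) = ∂₁Ψ(c(x), ∇c(x)) − div[y ↦ ∂₂Ψ(c(y), ∇c(y))](x) and μ̌̌(x) = ∂₁ψ(c(x), ∇c(x)) − (1/s(c(x))) div[y ↦ s(c(y)) ∂₂ψ(c(y),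 ∇c(y))](x). Then μ̌(x) = s(c(x)) μ̌̌(x) − β s(c(x))² ψ(c(x), ∇c(x)), where β = (ρ₂ − ρ₁)/(2ρ₁ρ₂). -/
/-- **Second identity of Lemma 3.1.**
Let `ψ` be a `C¹` mass-measure-based free energy, `c` a `C²` concentration
field, `s(a)` the density defined by `1/s(a) = (1+a)/(2ρ₁) + (1-a)/(2ρ₂)`, and
`Ψ(a,q) = s(a) ψ(a,q)` the associated volume-measure-based free energy.  If the
reciprocal density is nonzero at `x` and the two flux fields are differentiable
at `x`, then the chemical potentials
`μ̌(x) = ∂₁Ψ(c,∇c) - div(∂₂Ψ(c,∇c))` and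
`μ̌̌(x) = ∂₁ψ(c,∇c) - (1/s(c)) div(s(c) ∂₂ψ(c,∇c))` satisfy
`μ̌ = s(c) μ̌̌ - β s(c)² ψ(c,∇c)` with `β = (ρ₂-ρ₁)/(2ρ₁ρ₂)`. -/
theorem chemical_potential_identity_two
    {d : ℕ} (ρ₁ ρ₂ : ℝ) (hρ₁ : 0 < ρ₁) (hρ₂ : 0 < ρ₂)
    (ψ : ℝ × (Fin d → ℝ) → ℝ) (hψ : ContDiff ℝ 1 ψ)
    (c : (Fin d → ℝ) → ℝ) (hc : ContDiff ℝ 2 c)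
    (s : ℝ → ℝ) (hs : ∀ a, s a = ((1 + a) / (2 * ρ₁) + (1 - a) / (2 * ρ₂))⁻¹)
    (Ψ : ℝ × (Fin d → ℝ) → ℝ) (hΨ : ∀ a q, Ψ (a, q) = s a * ψ (a, q))
    (x : Fin d → ℝ)
    (hsx : (1 + c x) / (2 * ρ₁) + (1 - c x) / (2 * ρ₂) ≠ 0)
    (hF1 : DifferentiableAt ℝ (fun y => d2 Ψ (c y) (grad c y)) x)
    (hF2 : DifferentiableAt ℝ (fun y => s (c y) • d2 ψ (c y) (grad c y)) x) :
    d1 Ψ (c x) (grad c x) - diver (fun y => d2 Ψ (c y) (grad c y)) x =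
      s (c x) *
        (d1 ψ (c x) (grad c x)
          - (1 / s (c x)) * diver (fun y => s (c y) • d2 ψ (c y) (grad c y)) x)
      - ((ρ₂ - ρ₁) / (2 * ρ₁ * ρ₂)) * (s (c x)) ^ 2 * ψ (c x, grad c x) := by
  have hρ₁' : (ρ₁ : ℝ) ≠ 0 := ne_of_gt hρ₁
  have hρ₂' : (ρ₂ : ℝ) ≠ 0 := ne_of_gt hρ₂
  set r : ℝ → ℝ := fun t => (1 + t) / (2 * ρ₁) + (1 - t) / (2 * ρ₂) with hrdef
  set β : ℝ := 1 / (2 * ρ₁) - 1 / (2 * ρ₂) with hβ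
  have hsfun : s = fun t => (r t)⁻¹ := funext hs
  have hΨfun : Ψ = fun p : ℝ × (Fin d → ℝ) => s p.1 * ψ p := by
    funext p
    obtain ⟨u, v⟩ := p
    exact hΨ u v
  have hrderiv : ∀ t : ℝ, HasDerivAt r β t := by
    intro t
    have h1 : HasDerivAt (fun t : ℝ => (1 + t) / (2 * ρ₁)) (1 / (2 * ρ₁)) t := by
      simpa using ((hasDerivAt_id t).const_add 1).div_const (2 * ρ₁)
    have h2 : HasDerivAt (fun t : ℝ => (1 - t) / (2 * ρ₂)) (-1 / (2 * ρ₂)) t := by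
      simpa using ((hasDerivAt_id t).const_sub 1).div_const (2 * ρ₂)
    have := h1.add h2
    rw [hβ]
    exact this.congr_deriv (by ring)
  have hsderiv : ∀ t : ℝ, r t ≠ 0 → HasDerivAt s (-β * (s t) ^ 2) t := by
    intro t ht
    rw [hsfun]
    have := (hrderiv t).inv ht
    refine this.congr_deriv ?_
    simp only [inv_pow]
    field_simp
  have hψdiff : Differentiable ℝ ψ := hψ.differentiable one_ne_zero
  -- key derivative formula for Ψ at good points
  have hΨfd : ∀ (t : ℝ) (v : Fin d → ℝ), r t ≠ 0 →
      HasFDerivAt Ψ (s t • fderiv ℝ ψ (t, v)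
        + ψ (t, v) • ((-β * (s t) ^ 2) • ContinuousLinearMap.fst ℝ ℝ (Fin d → ℝ)))
        (t, v) := by
    intro t v ht
    have hg : HasFDerivAt (fun p : ℝ × (Fin d → ℝ) => s p.1)
        ((-β * (s t) ^ 2) • ContinuousLinearMap.fst ℝ ℝ (Fin d → ℝ)) (t, v) := by
      have := HasDerivAt.comp_hasFDerivAt (𝕜 := ℝ) ((t, v) : ℝ × (Fin d → ℝ))
        (hsderiv t ht) hasFDerivAt_fst
      exact this
    have hψ' : HasFDerivAt ψ (fderiv ℝ ψ (t, v)) (t, v) :=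
      (hψdiff (t, v)).hasFDerivAt
    have := HasFDerivAt.mul (𝕜 := ℝ) hg hψ'
    rw [hΨfun]
    exact this
  have hd1Ψ : ∀ (t : ℝ) (v : Fin d → ℝ), r t ≠ 0 →
      d1 Ψ t v = s t * d1 ψ t v + (-β * (s t) ^ 2) * ψ (t, v) := by
    intro t v ht
    have h := (hΨfd t v ht).fderiv
    simp only [d1, h]
    simp [d1, ContinuousLinearMap.add_apply, ContinuousLinearMap.smul_apply]
    ring
  have hd2Ψ : ∀ (t : ℝ) (v : Fin d → ℝ), r t ≠ 0 →
      d2 Ψ t v = s t • d2 ψ t v := by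
    intro t v ht
    have h := (hΨfd t v ht).fderiv
    funext i
    simp only [d2, h]
    simp [d2, ContinuousLinearMap.add_apply, ContinuousLinearMap.smul_apply]
  -- the two flux fields agree near x
  have hrc : Continuous fun y => r (c y) := by
    have := hc.continuous
    fun_prop
  have hev : (fun y => d2 Ψ (c y) (grad c y))
      =ᶠ[nhds x] (fun y => s (c y) • d2 ψ (c y) (grad c y)) := by
    have hne : ∀ᶠ y in nhds x, r (c y) ≠ 0 :=
      hrc.continuousAt.eventually_ne hsx
    filter_upwards [hne] with y hy
    exact hd2Ψ (c y) (grad c y) hy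
  have hdiv_eq : diver (fun y => d2 Ψ (c y) (grad c y)) x
      = diver (fun y => s (c y) • d2 ψ (c y) (grad c y)) x := by
    unfold diver
    rw [hev.fderiv_eq]
  have hsne : s (c x) ≠ 0 := by
    rw [hs]
    exact inv_ne_zero hsx
  rw [hdiv_eq, hd1Ψ (c x) (grad c x) hsx]
  simp only [hβ]
  field_simp
  ring
end

section
/- Third identity of Lemma 3.1 (chain rule for variational derivatives): let g : ℝ → ℝ be twice continuously differentiable, Ψ : ℝ × ℝ^d → ℝ continuously differentiable, and c : ℝ^d → ℝ twice continuously differentiable. Define Ψ̌(a, q) = Ψ(g(a), g'(a) q). Fix x ∈ ℝ^d and assume the vector fields y ↦ ∂₂Ψ(g(c(y)), g'(c(y)) ∇c(y)) and y ↦ ∂₂Ψ̌(c(y), ∇c(y)) are differentiable at x. Define μ(x) = ∂₁Ψ(g(c(x)), g'(c(x)) ∇c(x)) − div[y ↦ ∂₂Ψ(g(c(y)), g'(c(y)) ∇c(y))](x) and μ̌(x) = ∂₁Ψ̌(c(x), ∇c(x)) − div[y ↦ ∂₂Ψ̌(c(y), ∇c(y))](x). Then μ̌(x) = g'(c(x))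 · μ(x). -/
/-- **Third identity of Lemma 3.1 (chain rule for variational derivatives).**
Let `g : ℝ → ℝ` be `C²`, `Ψ : ℝ × ℝ^d → ℝ` be `C¹`, `c : ℝ^d → ℝ` be `C²`, and
let `Ψ̌(a,q) = Ψ(g(a), g'(a) q)` be the transformed free energy.  If the two
flux fields are differentiable at `x`, then the chemical potentials
`μ(x) = ∂₁Ψ(g(c),g'(c)∇c) - div(∂₂Ψ(g(c),g'(c)∇c))` and
`μ̌(x) = ∂₁Ψ̌(c,∇c) - div(∂₂Ψ̌(c,∇c))` satisfy `μ̌(x) = g'(c(x)) μ(x)`. -/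
theorem chemical_potential_chain_rule
    {d : ℕ}
    (g : ℝ → ℝ) (hg : ContDiff ℝ 2 g)
    (Ψ : ℝ × (Fin d → ℝ) → ℝ) (hΨ : ContDiff ℝ 1 Ψ)
    (c : (Fin d → ℝ) → ℝ) (hc : ContDiff ℝ 2 c)
    (Ψc : ℝ × (Fin d → ℝ) → ℝ)
    (hΨc : ∀ a q, Ψc (a, q) = Ψ (g a, deriv g a • q))
    (x : Fin d → ℝ)
    (hF1 : DifferentiableAt ℝ
      (fun y => d2 Ψ (g (c y)) (deriv g (c y) • grad c y)) x)
    (hF2 : DifferentiableAt ℝ (fun y => d2 Ψc (c y) (grad c y)) x) :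
    d1 Ψc (c x) (grad c x) - diver (fun y => d2 Ψc (c y) (grad c y)) x =
      deriv g (c x) *
        (d1 Ψ (g (c x)) (deriv g (c x) • grad c x)
          - diver (fun y => d2 Ψ (g (c y)) (deriv g (c y) • grad c y)) x) := by
  have hgd : Differentiable ℝ g := hg.differentiable two_ne_zero
  have hGd : Differentiable ℝ (deriv g) := by
    have h2 : ContDiff ℝ ((1:ℕ) + 1) g := by exact_mod_cast hg
    exact (contDiff_succ_iff_deriv.mp h2).2.2.differentiable one_ne_zero
  have hcd : Differentiable ℝ c := hc.differentiable two_ne_zero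
  have hΨd : Differentiable ℝ Ψ := hΨ.differentiable one_ne_zero
  have hΨc' : Ψc = fun z : ℝ × (Fin d → ℝ) => Ψ (g z.1, deriv g z.1 • z.2) := by
    funext z; rw [← hΨc z.1 z.2]
  -- derivative of the transformation T z = (g z.1, g' z.1 • z.2)
  have hT : ∀ (a : ℝ) (q : Fin d → ℝ),
      HasFDerivAt (fun z : ℝ × (Fin d → ℝ) => (g z.1, deriv g z.1 • z.2))
        (((deriv g a • ContinuousLinearMap.fst ℝ ℝ (Fin d → ℝ)).prod
          (deriv g a • ContinuousLinearMap.snd ℝ ℝ (Fin d → ℝ) +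
            (deriv (deriv g) a • ContinuousLinearMap.fst ℝ ℝ (Fin d → ℝ)).smulRight q)))
        (a, q) := by
    intro a q
    have h1 : HasFDerivAt (fun z : ℝ × (Fin d → ℝ) => g z.1)
        (deriv g a • ContinuousLinearMap.fst ℝ ℝ (Fin d → ℝ)) (a, q) :=
      (hgd a).hasDerivAt.comp_hasFDerivAt _ hasFDerivAt_fst
    have h2 : HasFDerivAt (fun z : ℝ × (Fin d → ℝ) => deriv g z.1)
        (deriv (deriv g) a • ContinuousLinearMap.fst ℝ ℝ (Fin d → ℝ)) (a, q) :=
      by have := (hGd a).hasDerivAt.comp_hasFDerivAt (a, q)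
           (hasFDerivAt_fst : HasFDerivAt (Prod.fst : ℝ × (Fin d → ℝ) → ℝ) (ContinuousLinearMap.fst ℝ ℝ (Fin d → ℝ)) (a, q)); exact this
    exact HasFDerivAt.prodMk h1 (h2.smul hasFDerivAt_snd)
  have hΨcD : ∀ (a : ℝ) (q : Fin d → ℝ),
      HasFDerivAt Ψc
        ((fderiv ℝ Ψ (g a, deriv g a • q)).comp
          ((deriv g a • ContinuousLinearMap.fst ℝ ℝ (Fin d → ℝ)).prod
            (deriv g a • ContinuousLinearMap.snd ℝ ℝ (Fin d → ℝ) +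
              (deriv (deriv g) a • ContinuousLinearMap.fst ℝ ℝ (Fin d → ℝ)).smulRight q)))
        (a, q) := by
    intro a q
    rw [hΨc']
    exact (hΨd _).hasFDerivAt.comp _ (hT a q)
  -- expansion of the second slot of fderiv Ψ
  have hL2 : ∀ (p : ℝ × (Fin d → ℝ)) (v : Fin d → ℝ),
      fderiv ℝ Ψ p ((0 : ℝ), v) = ∑ i, v i * fderiv ℝ Ψ p (0, Pi.single i 1) := by
    intro p v
    have hv : ((0 : ℝ), v) = ∑ i, v i • (((0 : ℝ), (Pi.single i 1 : Fin d → ℝ)) : ℝ × (Fin d → ℝ)) := by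
      apply Prod.ext
      · simp [Prod.fst_sum]
      · simp only [Prod.snd_sum, Prod.smul_mk]
        funext j
        simp [Finset.sum_apply, Pi.single_apply, mul_ite, mul_one, mul_zero]
    rw [hv, map_sum]
    refine Finset.sum_congr rfl fun i _ => ?_
    rw [map_smul, smul_eq_mul]
  have hd2 : ∀ (a : ℝ) (q : Fin d → ℝ),
      d2 Ψc a q = deriv g a • d2 Ψ (g a) (deriv g a • q) := by
    intro a q
    funext i
    have := (hΨcD a q).fderiv
    simp only [d2, this, ContinuousLinearMap.comp_apply, ContinuousLinearMap.prod_apply,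
      ContinuousLinearMap.add_apply, ContinuousLinearMap.smul_apply,
      ContinuousLinearMap.coe_fst', ContinuousLinearMap.coe_snd',
      ContinuousLinearMap.smulRight_apply, Pi.smul_apply]
    rw [show ((deriv g a • (0:ℝ), deriv g a • (Pi.single i 1 : Fin d → ℝ) + (deriv (deriv g) a • (0:ℝ)) • q) : ℝ × (Fin d → ℝ))
        = deriv g a • (((0:ℝ), (Pi.single i 1 : Fin d → ℝ)) : ℝ × (Fin d → ℝ)) by simp [Prod.smul_mk]]
    exact (fderiv ℝ Ψ (g a, deriv g a • q)).map_smul _ _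
  have hd1 : d1 Ψc (c x) (grad c x) =
      deriv g (c x) * d1 Ψ (g (c x)) (deriv g (c x) • grad c x) +
        deriv (deriv g) (c x) *
          ∑ i, grad c x i * d2 Ψ (g (c x)) (deriv g (c x) • grad c x) i := by
    set a := c x
    set q := grad c x
    have := (hΨcD a q).fderiv
    simp only [d1, this, ContinuousLinearMap.comp_apply, ContinuousLinearMap.prod_apply,
      ContinuousLinearMap.add_apply, ContinuousLinearMap.smul_apply,
      ContinuousLinearMap.coe_fst', ContinuousLinearMap.coe_snd',
      ContinuousLinearMap.smulRight_apply]
    have hsplit : ((deriv g a • (1:ℝ), deriv g a • (0 : Fin d → ℝ) + (deriv (deriv g) a • (1:ℝ)) • q) : ℝ × (Fin d → ℝ))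
        = deriv g a • (((1:ℝ), (0 : Fin d → ℝ)) : ℝ × (Fin d → ℝ)) + (((0:ℝ), deriv (deriv g) a • q) : ℝ × (Fin d → ℝ)) := by
      simp [Prod.smul_mk, Prod.mk_add_mk]
    rw [hsplit, map_add, map_smul, hL2]
    simp only [d2, d1, smul_eq_mul, Pi.smul_apply]
    rw [Finset.mul_sum]
    congr 1
    refine Finset.sum_congr rfl fun i _ => ?_
    ring
  -- divergence part
  set F1 : (Fin d → ℝ) → (Fin d → ℝ) :=
    fun y => d2 Ψ (g (c y)) (deriv g (c y) • grad c y) with hF1def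
  have hF2eq : (fun y => d2 Ψc (c y) (grad c y)) = fun y => deriv g (c y) • F1 y := by
    funext y
    rw [hd2]
  have hGc : HasFDerivAt (fun y => deriv g (c y))
      (deriv (deriv g) (c x) • fderiv ℝ c x) x :=
    (hGd (c x)).hasDerivAt.comp_hasFDerivAt _ (hcd x).hasFDerivAt
  have hF2D : HasFDerivAt (fun y => deriv g (c y) • F1 y)
      (deriv g (c x) • fderiv ℝ F1 x +
        (deriv (deriv g) (c x) • fderiv ℝ c x).smulRight (F1 x)) x :=
    hGc.smul hF1.hasFDerivAt
  have hdiv : diver (fun y => d2 Ψc (c y) (grad c y)) x =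
      deriv g (c x) * diver F1 x +
        deriv (deriv g) (c x) * ∑ i, grad c x i * F1 x i := by
    rw [hF2eq]
    unfold diver
    rw [hF2D.fderiv]
    simp only [ContinuousLinearMap.add_apply, ContinuousLinearMap.smul_apply,
      ContinuousLinearMap.smulRight_apply, Pi.add_apply, Pi.smul_apply, smul_eq_mul]
    rw [Finset.sum_add_distrib, Finset.mul_sum, Finset.mul_sum]
    congr 1
    refine Finset.sum_congr rfl fun i _ => ?_
    simp only [grad]
    ring
  rw [hd1, hdiv]
  simp only [hF1def]
  ring
end

section
/- Equivalence of modeling restrictions (1) and (2) of Theorem 3.1 (scalar core): let ρ₁, ρ₂ > 0 and φ, ψ, μ₂, p₂ ∈ ℝ. Set [[ρ]] = (ρ₁−ρ₂)/2, {ρ} = (ρ₁+ρ₂)/2, ρ = {ρ} + [[ρ]] φ, α = −[[ρ]]/{ρ}, Ψ = ρ ψ, μ₁ = ρ μ₂ + ψ [[ρ]], and p₁ = p₂ + ψ {ρ}. Then μ₁ + α p₁ = ρ μ₂ + α p₂ and p₁ + μ₁ φ − Ψ = p₂ + ρ μ₂ φ. Consequently the dissipation integrands of the volume-measure-based formulation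 (with chemical potential μ₁, pressure p₁, free energy Ψ) and of the mass-measure-based formulation (with chemical potential μ₂, pressure p₂, free energy density ψ) coincide. -/
/-- **Equivalence of modeling restrictions (1) and (2) of Theorem 3.1
(scalar core).**
Let `ρ₁, ρ₂ > 0` and `φ, ψ, μ₂, p₂ ∈ ℝ`.  With `J = [[ρ]] = (ρ₁-ρ₂)/2`,
`A = {ρ} = (ρ₁+ρ₂)/2`, mixture density `ρ = A + J φ`, `α = -J/A`, free energy
`Ψ = ρ ψ`, chemical potential `μ₁ = ρ μ₂ + ψ J` and pressure
`p₁ = p₂ + ψ A`, one has `μ₁ + α p₁ = ρ μ₂ + α p₂` and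
`p₁ + μ₁ φ - Ψ = p₂ + ρ μ₂ φ`, so the dissipation integrands of the
volume-measure-based and mass-measure-based formulations coincide. -/
theorem restriction_equivalence_volume_mass
    (ρ₁ ρ₂ φ ψ μ₂ p₂ J A ρ α Ψ μ₁ p₁ : ℝ)
    (hρ₁ : 0 < ρ₁) (hρ₂ : 0 < ρ₂)
    (hJ : J = (ρ₁ - ρ₂) / 2) (hA : A = (ρ₁ + ρ₂) / 2)
    (hρ : ρ = A + J * φ)
    (hα : α = -J / A)
    (hΨ : Ψ = ρ * ψ)
    (hμ₁ : μ₁ = ρ * μ₂ + ψ * J)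
    (hp₁ : p₁ = p₂ + ψ * A) :
    μ₁ + α * p₁ = ρ * μ₂ + α * p₂ ∧
    p₁ + μ₁ * φ - Ψ = p₂ + ρ * μ₂ * φ := by
  have hA0 : A ≠ 0 := by rw [hA]; positivity
  constructor
  · subst hμ₁ hp₁ hα; field_simp; ring
  · subst hΨ hμ₁ hp₁ hρ; ring
end
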